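/- Suppose that for μ-almost every s, the function f(·,s) is C² on a neighborhood of λ-almost every point of ℝ^d. Then the set Γ^c of step sizes γ > 0 for which the lazy-SGD kernel P_γ fails to preserve Lebesgue-absolute continuity is Lebesgue negligible in (0,∞). -/

import Mathlib

open MeasureTheory Filter Set
open scoped Classical

noncomputable def lazyGrad {d : ℕ} {Ξ : Type*}
    (f : EuclideanSpace ℝ (Fin d) × Ξ → ℝ)
    (x : EuclideanSpace ℝ (Fin d)) (s : Ξ) : EuclideanSpace ℝ (Fin d) :=
  if DifferentiableAt ℝ (fun y => f (y, s)) x then gradient (fun y => f (y, s)) x else 0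

/-- `γ ∈ Γ`: the lazy-SGD kernel `P_γ` preserves Lebesgue-absolute continuity. -/
def StepOK {d : ℕ} {Ξ : Type*} [MeasurableSpace Ξ] (μ : Measure Ξ)
    (f : EuclideanSpace ℝ (Fin d) × Ξ → ℝ) (γ : ℝ) : Prop :=
  ∀ ρ : Measure (EuclideanSpace ℝ (Fin d)), IsProbabilityMeasure ρ → ρ ≪ volume →
    (ρ.prod μ).map (fun p => p.1 - γ • lazyGrad f p.1 p.2) ≪ volume

set_option maxHeartbeats 2000000

section Aux

open Polynomial

variable {E : Type*} [NormedAddCommGroup E] [NormedSpace ℝ E]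

/-- sequence of difference quotients along direction `v` -/
noncomputable def dseq (h : E → ℝ) (x v : E) (n : ℕ) : ℝ :=
  (n : ℝ) * (h (x + (n : ℝ)⁻¹ • v) - h x)

/-- limsup of difference quotients: a measurable surrogate for a directional derivative -/
noncomputable def dlim (h : E → ℝ) (x v : E) : ℝ :=
  limsup (fun n => dseq h x v n) atTop

theorem dseq_tendsto {h : E → ℝ} {L : E →L[ℝ] ℝ} {x : E} (hh : HasFDerivAt h L x) (v : E) :
    Tendsto (fun n => dseq h x v n) atTop (nhds (L v)) := by
  have hl : HasDerivAt (fun t : ℝ => h (x + t • v)) (L v) 0 := hh.hasLineDerivAt v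
  have hs : Tendsto (slope (fun t : ℝ => h (x + t • v)) 0) (nhdsWithin 0 {(0:ℝ)}ᶜ) (nhds (L v)) :=
    hasDerivAt_iff_tendsto_slope.1 hl
  have h0 : Tendsto (fun n : ℕ => (n : ℝ)⁻¹) atTop (nhdsWithin 0 {(0:ℝ)}ᶜ) := by
    apply tendsto_nhdsWithin_of_tendsto_nhds_of_eventually_within _
      (tendsto_inv_atTop_zero.comp tendsto_natCast_atTop_atTop)
    filter_upwards [eventually_gt_atTop 0] with n hn
    exact inv_ne_zero (Nat.cast_ne_zero.2 hn.ne')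
  have := hs.comp h0
  apply this.congr'
  filter_upwards [eventually_gt_atTop 0] with n hn
  simp only [Function.comp_apply, slope_def_field, dseq, sub_zero, zero_smul, add_zero]
  field_simp

theorem dlim_eq_of_eventuallyEq {h g : E → ℝ} {L : E →L[ℝ] ℝ} {x : E}
    (hev : ∀ᶠ y in nhds x, h y = g y) (hg : HasFDerivAt g L x) (v : E) :
    dlim h x v = L v := by
  have htx : Tendsto (fun n : ℕ => x + (n : ℝ)⁻¹ • v) atTop (nhds x) := by
    have h1 : Tendsto (fun n : ℕ => (n : ℝ)⁻¹ • v) atTop (nhds ((0:ℝ) • v)) :=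
      (tendsto_inv_atTop_zero.comp (tendsto_natCast_atTop_atTop)).smul_const v
    simpa using tendsto_const_nhds.add h1
  have hevseq : ∀ᶠ n : ℕ in atTop, dseq h x v n = dseq g x v n := by
    have hx0 : h x = g x := hev.self_of_nhds
    filter_upwards [htx.eventually hev] with n h1
    simp only [dseq, h1, hx0]
  have : Tendsto (fun n => dseq h x v n) atTop (nhds (L v)) :=
    (dseq_tendsto hg v).congr' (hevseq.mono fun _ e => e.symm)
  exact this.limsup_eq

theorem dlim_eq {h : E → ℝ} {L : E →L[ℝ] ℝ} {x : E} (hh : HasFDerivAt h L x) (v : E) :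
    dlim h x v = L v :=
  dlim_eq_of_eventuallyEq (Eventually.of_forall fun _ => rfl) hh v

theorem measurable_dlim {Ξ : Type*} [MeasurableSpace Ξ] [MeasurableSpace E] [BorelSpace E]
    (h : E × Ξ → ℝ) (hh : Measurable h) (v : E) :
    Measurable fun p : E × Ξ => dlim (fun y => h (y, p.2)) p.1 v := by
  apply Measurable.limsup (f := fun n (p : E × Ξ) => dseq (fun y => h (y, p.2)) p.1 v n)
  intro n
  unfold dseq
  apply Measurable.const_mul
  exact (hh.comp ((measurable_fst.add_const _).prodMk measurable_snd)).sub hh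

section Hess

variable {d : ℕ} {Ξ : Type*}

theorem gradient_component (φ : EuclideanSpace ℝ (Fin d) → ℝ) (y : EuclideanSpace ℝ (Fin d))
    (i : Fin d) : gradient φ y i = fderiv ℝ φ y (EuclideanSpace.single i 1) := by
  have h1 : gradient φ y i
      = @inner ℝ _ _ (gradient φ y) (EuclideanSpace.single i (1:ℝ)) := by
    rw [EuclideanSpace.inner_single_right]; simp
  rw [h1, gradient, InnerProductSpace.toDual_symm_apply]

noncomputable def hessMat (φ : EuclideanSpace ℝ (Fin d) → ℝ) (x : EuclideanSpace ℝ (Fin d)) :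
    Matrix (Fin d) (Fin d) ℝ :=
  LinearMap.toMatrix (EuclideanSpace.basisFun (Fin d) ℝ).toBasis
    (EuclideanSpace.basisFun (Fin d) ℝ).toBasis (fderiv ℝ (gradient φ) x)

noncomputable def gradApproxC (f : EuclideanSpace ℝ (Fin d) × Ξ → ℝ) (i : Fin d)
    (p : EuclideanSpace ℝ (Fin d) × Ξ) : ℝ :=
  dlim (fun y => f (y, p.2)) p.1 (EuclideanSpace.single i 1)

noncomputable def hessApprox (f : EuclideanSpace ℝ (Fin d) × Ξ → ℝ)
    (p : EuclideanSpace ℝ (Fin d) × Ξ) : Matrix (Fin d) (Fin d) ℝ :=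
  fun i j => dlim (fun y => gradApproxC f i (y, p.2)) p.1 (EuclideanSpace.single j 1)

theorem measurable_hessApprox [MeasurableSpace Ξ] {f : EuclideanSpace ℝ (Fin d) × Ξ → ℝ}
    (hf : Measurable f) (i j : Fin d) : Measurable fun p => hessApprox f p i j := by
  exact measurable_dlim _ (measurable_dlim _ hf _) _

theorem contDiffOn_gradient {φ : EuclideanSpace ℝ (Fin d) → ℝ} {U : Set (EuclideanSpace ℝ (Fin d))}
    (hU : IsOpen U) (hφ : ContDiffOn ℝ 2 φ U) : ContDiffOn ℝ 1 (gradient φ) U := by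
  have hf : ContDiffOn ℝ 1 (fderiv ℝ φ) U := hφ.fderiv_of_isOpen hU (by norm_num)
  rw [contDiffOn_piLp]
  intro i
  have h2 : (fun y => gradient φ y i)
      = fun y => (fderiv ℝ φ y) (EuclideanSpace.single i 1) := by
    ext y; exact gradient_component φ y i
  exact h2 ▸ hf.clm_apply contDiffOn_const

theorem hessApprox_eq_hessMat {f : EuclideanSpace ℝ (Fin d) × Ξ → ℝ} {s : Ξ}
    {x : EuclideanSpace ℝ (Fin d)} {U : Set (EuclideanSpace ℝ (Fin d))}
    (hU : IsOpen U) (hxU : x ∈ U) (hC2 : ContDiffOn ℝ 2 (fun y => f (y, s)) U) :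
    hessApprox f (x, s) = hessMat (fun y => f (y, s)) x := by
  set φ : EuclideanSpace ℝ (Fin d) → ℝ := fun y => f (y, s) with hφdef
  have hgrad : ContDiffOn ℝ 1 (gradient φ) U := contDiffOn_gradient hU hC2
  have hGdiff : DifferentiableAt ℝ (gradient φ) x :=
    ((hgrad.differentiableOn one_ne_zero).differentiableAt (hU.mem_nhds hxU))
  set D := fderiv ℝ (gradient φ) x with hDdef
  have step1 : ∀ y ∈ U, ∀ i, gradApproxC f i (y, s) = gradient φ y i := by
    intro y hyU i
    have hdiff : DifferentiableAt ℝ φ y :=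
      (hC2.differentiableOn (by norm_num)).differentiableAt (hU.mem_nhds hyU)
    rw [gradApproxC, dlim_eq hdiff.hasFDerivAt, gradient_component]
  funext i j
  have hev : ∀ᶠ y in nhds x, gradApproxC f i (y, s) = gradient φ y i := by
    filter_upwards [hU.mem_nhds hxU] with y hy using step1 y hy i
  have hproj : HasFDerivAt (fun y => gradient φ y i)
      ((EuclideanSpace.proj (𝕜 := ℝ) i).comp D) x := by
    have h5 := (EuclideanSpace.proj (𝕜 := ℝ) (ι := Fin d) i).hasFDerivAt.comp x
      hGdiff.hasFDerivAt
    exact h5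
  have h4 : hessApprox f (x, s) i j = D (EuclideanSpace.single j 1) i :=
    dlim_eq_of_eventuallyEq hev hproj _
  rw [h4, hessMat]
  simp [LinearMap.toMatrix_apply, OrthonormalBasis.coe_toBasis,
    OrthonormalBasis.coe_toBasis_repr_apply, EuclideanSpace.basisFun_apply,
    EuclideanSpace.basisFun_repr]
  rfl

theorem det_one_sub_smul_hessMat (φ : EuclideanSpace ℝ (Fin d) → ℝ)
    (x : EuclideanSpace ℝ (Fin d)) (γ : ℝ) :
    (ContinuousLinearMap.id ℝ (EuclideanSpace ℝ (Fin d)) - γ • fderiv ℝ (gradient φ) x).det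
      = Matrix.det (1 - γ • hessMat φ x) := by
  set b := (EuclideanSpace.basisFun (Fin d) ℝ).toBasis
  rw [ContinuousLinearMap.det, ← LinearMap.det_toMatrix b]
  congr 1
  have : ((ContinuousLinearMap.id ℝ (EuclideanSpace ℝ (Fin d))
      - γ • fderiv ℝ (gradient φ) x : EuclideanSpace ℝ (Fin d) →L[ℝ] EuclideanSpace ℝ (Fin d)) :
        EuclideanSpace ℝ (Fin d) →ₗ[ℝ] EuclideanSpace ℝ (Fin d))
      = (LinearMap.id : EuclideanSpace ℝ (Fin d) →ₗ[ℝ] EuclideanSpace ℝ (Fin d))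
        - γ • ((fderiv ℝ (gradient φ) x) :
            EuclideanSpace ℝ (Fin d) →ₗ[ℝ] EuclideanSpace ℝ (Fin d)) := by
    ext y; simp
  rw [this, map_sub, _root_.map_smul, LinearMap.toMatrix_id, hessMat]

end Hess

theorem map_eval_one_sub_smul {d : ℕ} (M : Matrix (Fin d) (Fin d) ℝ) (γ : ℝ) :
    Matrix.det (1 - γ • M)
      = Polynomial.eval γ (Matrix.det ((1 : Matrix (Fin d) (Fin d) ℝ[X])
          - (Polynomial.X : ℝ[X]) • M.map Polynomial.C)) := by
  rw [← Polynomial.coe_evalRingHom, RingHom.map_det]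
  congr 1
  ext i j
  simp only [RingHom.mapMatrix_apply, Matrix.map_apply, Matrix.sub_apply, Matrix.smul_apply, Matrix.one_apply, apply_ite,
    Polynomial.eval_sub, Polynomial.eval_mul, Polynomial.eval_X, Polynomial.eval_C,
    Polynomial.eval_one, Polynomial.eval_zero, smul_eq_mul, mul_comm, map_sub, map_mul,
    Polynomial.coe_evalRingHom, apply_ite (Polynomial.eval γ)]

theorem finite_bad_gamma {d : ℕ} (M : Matrix (Fin d) (Fin d) ℝ) :
    {γ : ℝ | Matrix.det (1 - γ • M) = 0}.Finite := by
  set p : ℝ[X] := Matrix.det ((1 : Matrix (Fin d) (Fin d) ℝ[X])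
    - (Polynomial.X : ℝ[X]) • M.map Polynomial.C) with hp
  have hp0 : p ≠ 0 := by
    intro h
    have h1 : Matrix.det (1 - (0:ℝ) • M) = 0 := by
      rw [map_eval_one_sub_smul, ← hp, h]; simp
    simp at h1
  apply Set.Finite.subset (Polynomial.finite_setOf_isRoot hp0)
  intro γ hγ
  simp only [mem_setOf_eq] at hγ ⊢
  rw [Polynomial.IsRoot, hp, ← map_eval_one_sub_smul, hγ]

theorem key_slice {d : ℕ} {Ξ : Type*} (f : EuclideanSpace ℝ (Fin d) × Ξ → ℝ) (s : Ξ) (γ : ℝ)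
    (hae : ∀ᵐ x ∂(volume : Measure (EuclideanSpace ℝ (Fin d))),
      (∃ U ∈ nhds x, ContDiffOn ℝ 2 (fun y => f (y, s)) U) ∧
      Matrix.det (1 - γ • hessApprox f (x, s)) ≠ 0)
    (N : Set (EuclideanSpace ℝ (Fin d))) (hN : volume N = 0) :
    volume {x | x - γ • lazyGrad f x s ∈ N} = 0 := by
  set g : EuclideanSpace ℝ (Fin d) → EuclideanSpace ℝ (Fin d) :=
    fun x => x - γ • lazyGrad f x s with hgdef
  set E₀ : Set (EuclideanSpace ℝ (Fin d)) :=
    {x | (∃ U ∈ nhds x, ContDiffOn ℝ 2 (fun y => f (y, s)) U) ∧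
      Matrix.det (1 - γ • hessApprox f (x, s)) ≠ 0} with hE₀def
  have hE₀ : volume E₀ᶜ = 0 := by
    rw [hE₀def, compl_setOf]
    exact ae_iff.1 hae
  have hpoint : ∀ x ∈ E₀, ∃ V : Set (EuclideanSpace ℝ (Fin d)), IsOpen V ∧ x ∈ V ∧
      volume {y | y ∈ V ∧ g y ∈ N} = 0 := by
    rintro x ⟨⟨U₀, hU₀nhds, hC2₀⟩, hdet⟩
    set U := interior U₀ with hUdef
    have hUopen : IsOpen U := isOpen_interior
    have hxU : x ∈ U := mem_interior_iff_mem_nhds.2 hU₀nhds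
    have hC2 : ContDiffOn ℝ 2 (fun y => f (y, s)) U := hC2₀.mono interior_subset
    have hMeq : hessApprox f (x, s) = hessMat (fun y => f (y, s)) x :=
      hessApprox_eq_hessMat hUopen hxU hC2
    have hgrad : ContDiffOn ℝ 1 (gradient fun y => f (y, s)) U := contDiffOn_gradient hUopen hC2
    have hGdiff : DifferentiableAt ℝ (gradient fun y => f (y, s)) x :=
      (hgrad.differentiableOn one_ne_zero).differentiableAt (hUopen.mem_nhds hxU)
    set g' : EuclideanSpace ℝ (Fin d) → EuclideanSpace ℝ (Fin d) :=
      fun y => y - γ • gradient (fun y => f (y, s)) y with hg'def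
    have hg'U : ∀ y ∈ U, g y = g' y := by
      intro y hy
      have hdy : DifferentiableAt ℝ (fun y => f (y, s)) y :=
        (hC2.differentiableOn (by norm_num)).differentiableAt (hUopen.mem_nhds hy)
      simp only [hgdef, hg'def, lazyGrad, if_pos hdy]
    have hcg' : ContDiffOn ℝ 1 g' U := by
      exact (contDiffOn_id.sub (hgrad.const_smul γ))
    have hcgx : ContDiffAt ℝ 1 g' x := hcg'.contDiffAt (hUopen.mem_nhds hxU)
    set D := fderiv ℝ (gradient fun y => f (y, s)) x with hDdef
    set L : EuclideanSpace ℝ (Fin d) →L[ℝ] EuclideanSpace ℝ (Fin d) :=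
      ContinuousLinearMap.id ℝ (EuclideanSpace ℝ (Fin d)) - γ • D with hLdef
    have hLdet : L.det ≠ 0 := by
      rw [hLdef, hDdef, det_one_sub_smul_hessMat, ← hMeq]; exact hdet
    have hL : HasFDerivAt g' L x := (hasFDerivAt_id x).sub (hGdiff.hasFDerivAt.const_smul γ)
    set e := L.toContinuousLinearEquivOfDetNeZero hLdet with hedef
    have hLe : HasFDerivAt g' (e : EuclideanSpace ℝ (Fin d) →L[ℝ] EuclideanSpace ℝ (Fin d)) x := by
      rw [hedef, ContinuousLinearMap.coe_toContinuousLinearEquivOfDetNeZero]; exact hL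
    set iv := hcgx.localInverse hLe one_ne_zero with hivdef
    have hiC : ContDiffAt ℝ 1 iv (g' x) := hcgx.to_localInverse hLe one_ne_zero
    have hleft : ∀ᶠ y in nhds x, iv (g' y) = y :=
      (hcgx.hasStrictFDerivAt' hLe one_ne_zero).eventually_left_inverse
    obtain ⟨W, hWn, hWsm⟩ := hiC.contDiffOn le_rfl (by simp)
    have hWdiff : DifferentiableOn ℝ iv (interior W) :=
      (hWsm.mono interior_subset).differentiableOn one_ne_zero
    have hWn' : interior W ∈ nhds (g' x) := interior_mem_nhds.2 hWn
    have hpre : g' ⁻¹' (interior W) ∈ nhds x := hcgx.continuousAt.preimage_mem_nhds hWn'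
    set V := interior (U ∩ {y | iv (g' y) = y} ∩ g' ⁻¹' (interior W)) with hVdef
    have hxV : x ∈ V := by
      rw [hVdef, mem_interior_iff_mem_nhds]
      exact Filter.inter_mem (Filter.inter_mem (hUopen.mem_nhds hxU) hleft) hpre
    refine ⟨V, isOpen_interior, hxV, ?_⟩
    have hsub : {y | y ∈ V ∧ g y ∈ N} ⊆ iv '' (N ∩ interior W) := by
      rintro y ⟨hyV, hyN⟩
      obtain ⟨⟨hyU, hyinv⟩, hyW⟩ := interior_subset hyV
      have hgy : g y = g' y := hg'U y hyU
      exact ⟨g' y, ⟨hgy ▸ hyN, hyW⟩, hyinv⟩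
    apply measure_mono_null hsub
    exact addHaar_image_eq_zero_of_differentiableOn_of_addHaar_eq_zero volume
      (hWdiff.mono inter_subset_right) (measure_mono_null inter_subset_left hN)
  -- countable covering
  have hpoint' : ∀ x : E₀, ∃ V : Set (EuclideanSpace ℝ (Fin d)), IsOpen V ∧ (x : EuclideanSpace ℝ (Fin d)) ∈ V ∧
      volume {y | y ∈ V ∧ g y ∈ N} = 0 := fun x => hpoint x x.2
  choose V hVopen hVmem hVnull using hpoint'
  obtain ⟨T, hTcnt, hTeq⟩ := TopologicalSpace.isOpen_iUnion_countable V hVopen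
  have hsub : {x | g x ∈ N} ⊆ E₀ᶜ ∪ ⋃ x ∈ T, {y | y ∈ V x ∧ g y ∈ N} := by
    intro y hy
    by_cases hyE : y ∈ E₀
    · right
      have h1 : y ∈ ⋃ x : E₀, V x := mem_iUnion.2 ⟨⟨y, hyE⟩, hVmem _⟩
      rw [← hTeq] at h1
      obtain ⟨x, hxT, hyV⟩ := mem_iUnion₂.1 h1
      exact mem_biUnion hxT ⟨hyV, hy⟩
    · exact Or.inl hyE
  apply measure_mono_null hsub
  apply measure_union_null hE₀
  exact (measure_biUnion_null_iff hTcnt).2 fun x _ => hVnull x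

end Aux

/-- if for `μ`-a.e. `s`, `f(·,s)` is `C²` on a neighborhood of `λ`-a.e.
point of `ℝ^d`, then the set of step sizes `γ > 0` failing to preserve
Lebesgue-absolute continuity is Lebesgue negligible. -/
theorem stmt6 {d : ℕ} {Ξ : Type*} [MeasurableSpace Ξ]
    (μ : Measure Ξ) [IsProbabilityMeasure μ]
    (f : EuclideanSpace ℝ (Fin d) × Ξ → ℝ)
    (hf : Measurable f)
    (hlip : ∀ s : Ξ, LocallyLipschitz (fun y => f (y, s)))
    (hC2 : ∀ᵐ s ∂μ, ∀ᵐ x ∂(volume : Measure (EuclideanSpace ℝ (Fin d))),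
      ∃ U ∈ nhds x, ContDiffOn ℝ 2 (fun y => f (y, s)) U) :
    (volume : Measure ℝ) {γ : ℝ | 0 < γ ∧ ¬ StepOK μ f γ} = 0 := by
  -- measurability of the determinant condition
  have hent : ∀ i j : Fin d, Measurable fun q : (Ξ × EuclideanSpace ℝ (Fin d)) × ℝ =>
      ((1 : Matrix (Fin d) (Fin d) ℝ) - q.2 • hessApprox f (q.1.2, q.1.1)) i j := by
    intro i j
    have h1 : Measurable fun q : (Ξ × EuclideanSpace ℝ (Fin d)) × ℝ =>
        hessApprox f (q.1.2, q.1.1) i j :=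
      (measurable_hessApprox hf i j).comp
        ((measurable_snd.comp measurable_fst).prodMk (measurable_fst.comp measurable_fst))
    simp only [Matrix.sub_apply, Matrix.smul_apply, smul_eq_mul]
    exact measurable_const.sub (measurable_snd.mul h1)
  have hdetmeas : Measurable fun q : (Ξ × EuclideanSpace ℝ (Fin d)) × ℝ =>
      Matrix.det ((1 : Matrix (Fin d) (Fin d) ℝ) - q.2 • hessApprox f (q.1.2, q.1.1)) := by
    simp_rw [Matrix.det_apply']
    apply Finset.measurable_sum
    intro σ _
    apply Measurable.const_mul
    exact Finset.measurable_prod _ fun i _ => hent (σ i) i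
  set T : Set ((Ξ × EuclideanSpace ℝ (Fin d)) × ℝ) :=
    {q | Matrix.det ((1 : Matrix (Fin d) (Fin d) ℝ) - q.2 • hessApprox f (q.1.2, q.1.1)) = 0}
    with hTdef
  have hTmeas : MeasurableSet T := hdetmeas (measurableSet_singleton 0)
  have hPT : ((μ.prod (volume : Measure (EuclideanSpace ℝ (Fin d)))).prod
      (volume : Measure ℝ)) T = 0 := by
    rw [Measure.measure_prod_null hTmeas]
    refine Eventually.of_forall fun p => ?_
    exact Set.Finite.measure_zero (finite_bad_gamma (hessApprox f (p.2, p.1))) _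
  have hT'meas : MeasurableSet (Prod.swap ⁻¹' T :
      Set (ℝ × (Ξ × EuclideanSpace ℝ (Fin d)))) := measurable_swap hTmeas
  have hswapT : ((volume : Measure ℝ).prod
      (μ.prod (volume : Measure (EuclideanSpace ℝ (Fin d))))) (Prod.swap ⁻¹' T) = 0 := by
    rw [Measure.measurePreserving_swap.measure_preimage hTmeas.nullMeasurableSet]
    exact hPT
  have hae1 := (Measure.measure_prod_null hT'meas).1 hswapT
  -- the good step sizes
  have hγae : ∀ᵐ γ ∂(volume : Measure ℝ), StepOK μ f γ := by
    filter_upwards [hae1] with γ hγ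
    have hsecmeas : MeasurableSet (Prod.mk γ ⁻¹' (Prod.swap ⁻¹' T)) :=
      measurable_prodMk_left hT'meas
    have hs1 : ∀ᵐ s ∂μ, (volume : Measure (EuclideanSpace ℝ (Fin d)))
        {x | Matrix.det ((1 : Matrix (Fin d) (Fin d) ℝ) - γ • hessApprox f (x, s)) = 0} = 0 :=
      (Measure.measure_prod_null hsecmeas).1 hγ
    intro ρ hρ hρac
    by_cases hAE : AEMeasurable (fun p : EuclideanSpace ℝ (Fin d) × Ξ =>
      p.1 - γ • lazyGrad f p.1 p.2) (ρ.prod μ)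
    · set G := hAE.mk _ with hGdef
      have hGmeas : Measurable G := hAE.measurable_mk
      have hGeq := hAE.ae_eq_mk
      refine Measure.AbsolutelyContinuous.mk fun N hNmeas hNvol => ?_
      rw [Measure.map_congr hGeq, Measure.map_apply hGmeas hNmeas]
      have hSm : MeasurableSet (G ⁻¹' N) := hGmeas hNmeas
      rw [← Measure.measurePreserving_swap.measure_preimage hSm.nullMeasurableSet,
        Measure.measure_prod_null (measurable_swap hSm)]
      have hswapeq : (fun p : EuclideanSpace ℝ (Fin d) × Ξ => p.1 - γ • lazyGrad f p.1 p.2)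
            ∘ Prod.swap =ᵐ[μ.prod ρ] G ∘ Prod.swap :=
        Measure.measurePreserving_swap.quasiMeasurePreserving.ae_eq_comp hGeq
      have haes := Measure.ae_ae_of_ae_prod hswapeq
      filter_upwards [haes, hs1, hC2] with s heqs hdets hc2s
      have hd : ∀ᵐ x ∂(volume : Measure (EuclideanSpace ℝ (Fin d))),
          Matrix.det ((1 : Matrix (Fin d) (Fin d) ℝ) - γ • hessApprox f (x, s)) ≠ 0 := by
        rw [ae_iff]
        simpa only [ne_eq, not_not] using hdets
      have hvol : volume {x | x - γ • lazyGrad f x s ∈ N} = 0 := by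
        apply key_slice f s γ _ N hNvol
        filter_upwards [hc2s, hd] with x h1 h2 using ⟨h1, h2⟩
      have hρvol : ρ {x | x - γ • lazyGrad f x s ∈ N} = 0 := hρac hvol
      have hsub : Prod.mk s ⁻¹' (Prod.swap ⁻¹' (G ⁻¹' N)) ⊆
          {x | x - γ • lazyGrad f x s ∈ N} ∪
          {x | ¬ (x - γ • lazyGrad f x s = G (x, s))} := by
        intro x hx
        by_cases h : x - γ • lazyGrad f x s = G (x, s)
        · exact Or.inl (by simpa [h] using hx)
        · exact Or.inr h
      apply measure_mono_null hsub
      apply measure_union_null hρvol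
      exact ae_iff.1 heqs
    · rw [Measure.map_of_not_aemeasurable hAE]
      exact Measure.AbsolutelyContinuous.mk fun s _ _ => by simp
  exact measure_mono_null (fun γ h => h.2) (ae_iff.1 hγae)
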